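/- arXiv:1507.02484 — 2 statements merged into one kernel-verified Lean document; each statement's English description precedes it below -/
import Mathlib

section
/- Let I_old, I_new : ℝ^M → ℝ with I_new differentiable, let ∇̄I be a discrete gradient of I_new, let S̄ be a skew-symmetric matrix, let û, z ∈ ℝ^M with ⟨∇̄I(û, u^{n+1}), z⟩ ≠ 0. If u^{n+1} = û - ((I_new(û) - I_old(u^n)) / ⟨∇̄I(û,u^{n+1}), z⟩) z + Δt S̄ ∇̄I(û, u^{n+1}), then I_new(u^{n+1}) = I_old(u^n). -/
open Matrix

theorem stmt_10 {M : ℕ} (Iold Inew : (Fin M → ℝ) → ℝ) (hInew : Differentiable ℝ Inew)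
    (DG : (Fin M → ℝ) → (Fin M → ℝ) → (Fin M → ℝ))
    (hDG : ∀ v u, DG v u ⬝ᵥ (u - v) = Inew u - Inew v)
    (S : Matrix (Fin M) (Fin M) ℝ) (hS : Sᵀ = -S)
    (Δt : ℝ) (un uhat unext z : Fin M → ℝ)
    (hz : DG uhat unext ⬝ᵥ z ≠ 0)
    (hstep : unext = uhat - ((Inew uhat - Iold un) / (DG uhat unext ⬝ᵥ z)) • z
        + Δt • S.mulVec (DG uhat unext)) :
    Inew unext = Iold un := by
  set g := DG uhat unext with hg
  have hskew : g ⬝ᵥ S.mulVec g = 0 := by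
    have h1 : g ⬝ᵥ S.mulVec g = S.vecMul g ⬝ᵥ g := (Matrix.dotProduct_mulVec g S g)
    have h2 : S.vecMul g = -(S.mulVec g) := by
      rw [← Matrix.mulVec_transpose, hS, Matrix.neg_mulVec]
    have h3 : g ⬝ᵥ S.mulVec g = -(g ⬝ᵥ S.mulVec g) := by
      conv_lhs => rw [h1, h2]
      rw [neg_dotProduct, dotProduct_comm]
    linarith
  have key := hDG uhat unext
  rw [← hg] at key
  have hdiff : unext - uhat = -(((Inew uhat - Iold un) / (g ⬝ᵥ z)) • z)
      + Δt • S.mulVec g := by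
    rw [hstep]; abel
  rw [hdiff] at key
  rw [dotProduct_add, dotProduct_neg, dotProduct_smul,
    dotProduct_smul, hskew] at key
  have : -((Inew uhat - Iold un) / (g ⬝ᵥ z) * (g ⬝ᵥ z)) + Δt * 0
      = Inew unext - Inew uhat := key
  field_simp at this
  linarith
end

section
/- Let I₀ ∈ ℝ, let I : ℝ^M → ℝ be differentiable, let ∇̄I be any discrete gradient of I, let g, z, û ∈ ℝ^M, and Δt ∈ ℝ. Suppose u ∈ ℝ^M and λ ∈ ℝ satisfy the linear projection equations u - û - Δt·g - λz = 0 and I(u) = I₀, and suppose ⟨∇̄I(û,u), z⟩ ≠ 0. Then u satisfies the discrete gradient moving-mesh scheme u = û - ((I(û) - I₀)/⟨∇̄I(û,u), z⟩) z + Δt S ∇̄I(û,u), with S = (g zᵀ - z gᵀ)/⟨∇̄I(û,u), z⟩. -/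
open Matrix

lemma vecMulVec_mulVec_aux {M : ℕ} (a b d : Fin M → ℝ) :
    (vecMulVec a b).mulVec d = (b ⬝ᵥ d) • a := by
  funext i
  simp only [mulVec, vecMulVec_apply, dotProduct, Pi.smul_apply, smul_eq_mul,
    Finset.mul_sum]
  rw [Finset.sum_mul]
  exact Finset.sum_congr rfl fun j _ => by ring

theorem stmt_12 {M : ℕ} (I₀ : ℝ) (I : (Fin M → ℝ) → ℝ) (hI : Differentiable ℝ I)
    (DG : (Fin M → ℝ) → (Fin M → ℝ) → (Fin M → ℝ))
    (hDG : ∀ v u, DG v u ⬝ᵥ (u - v) = I u - I v)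
    (g z uhat u : Fin M → ℝ) (Δt lam : ℝ)
    (heq1 : u - uhat - Δt • g - lam • z = 0)
    (heq2 : I u = I₀)
    (hz : DG uhat u ⬝ᵥ z ≠ 0) :
    u = uhat - ((I uhat - I₀) / (DG uhat u ⬝ᵥ z)) • z
        + Δt • (((DG uhat u ⬝ᵥ z)⁻¹ • (vecMulVec g z - vecMulVec z g)).mulVec (DG uhat u)) := by
  set d := DG uhat u with hd
  set c := d ⬝ᵥ z with hc
  have hu : u = uhat + Δt • g + lam • z := by
    have h : u - (uhat + Δt • g + lam • z) = 0 := by rw [← heq1]; abel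
    exact sub_eq_zero.mp h
  have hdu : d ⬝ᵥ (u - uhat) = I₀ - I uhat := by rw [hd, hDG, heq2]
  have hsub : u - uhat = Δt • g + lam • z := by rw [hu]; abel
  have hlam : Δt * (d ⬝ᵥ g) + lam * c = I₀ - I uhat := by
    rw [hsub] at hdu
    simpa [dotProduct_add, dotProduct_smul, smul_eq_mul, hc] using hdu
  have hmv : ((c⁻¹ • (vecMulVec g z - vecMulVec z g)).mulVec d)
      = c⁻¹ • ((z ⬝ᵥ d) • g - (g ⬝ᵥ d) • z) := by
    rw [smul_mulVec, sub_mulVec, vecMulVec_mulVec_aux, vecMulVec_mulVec_aux]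
  rw [hmv, hu]
  have hzd : z ⬝ᵥ d = c := by rw [hc, dotProduct_comm]
  rw [hzd]
  funext i
  simp only [Pi.add_apply, Pi.sub_apply, Pi.smul_apply, smul_eq_mul, mul_sub, mul_add]
  have hc0 : c ≠ 0 := hz
  have hgd : g ⬝ᵥ d = d ⬝ᵥ g := dotProduct_comm _ _
  field_simp
  linear_combination (z i) * hlam + Δt * (z i) * hgd
end
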